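/- Suppose μ̂ is affine on [u, v] with u = x_{k_1} and v = x_{k_2} consecutive kink points (or endpoints). Then |Σ_{i: u ≤ x_i ≤ v} (Y_i - μ̂(x_i))| ≤ |Y_{k_1} - μ̂(x_{k_1})| + |Y_{k_2} - μ̂(x_{k_2})| and |Σ_{i: u ≤ x_i ≤ v} x_i (Y_i - μ̂(x_i))| ≤ |x_{k_1}||Y_{k_1} - μ̂(x_{k_1})| + |x_{k_2}||Y_{k_2} - μ̂(x_{k_2})|. -/

import Mathlib

lemma sum_split_aux (n : ℕ) (x : Fin n → ℝ) (hx : StrictMono x)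
    (k1 k2 : Fin n) (hk : k1 < k2) (u v : ℝ) (hu : u = x k1) (hv : v = x k2)
    (f : Fin n → ℝ) :
    ∑ i ∈ Finset.univ.filter (fun i => u ≤ x i ∧ x i ≤ v), f i =
      ∑ i ∈ Finset.univ.filter (fun i => u < x i ∧ x i < v), f i + f k1 + f k2 := by
  have hset : Finset.univ.filter (fun i => u ≤ x i ∧ x i ≤ v) =
      insert k1 (insert k2 (Finset.univ.filter (fun i => u < x i ∧ x i < v))) := by
    ext i
    simp only [Finset.mem_filter, Finset.mem_univ, true_and, Finset.mem_insert,
      hu, hv, hx.le_iff_le, hx.lt_iff_lt]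
    constructor
    · rintro ⟨h1, h2⟩
      rcases eq_or_lt_of_le h1 with h | h
      · exact Or.inl h.symm
      · rcases eq_or_lt_of_le h2 with h' | h'
        · exact Or.inr (Or.inl h')
        · exact Or.inr (Or.inr ⟨h, h'⟩)
    · rintro (rfl | rfl | ⟨h1, h2⟩)
      · exact ⟨le_refl _, hk.le⟩
      · exact ⟨hk.le, le_refl _⟩
      · exact ⟨h1.le, h2.le⟩
  have hk2 : k2 ∉ Finset.univ.filter (fun i => u < x i ∧ x i < v) := by
    simp [hv]
  have hk1 : k1 ∉ insert k2 (Finset.univ.filter (fun i => u < x i ∧ x i < v)) := by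
    simp [hu, hk.ne, lt_irrefl]
  rw [hset, Finset.sum_insert hk1, Finset.sum_insert hk2]
  ring

theorem stmt_6 (n : ℕ) (x : Fin n → ℝ) (hx : StrictMono x) (Y : Fin n → ℝ)
    (μhat : ℝ → ℝ) (k1 k2 : Fin n) (hk : k1 < k2)
    (u v : ℝ) (hu : u = x k1) (hv : v = x k2)
    (h1 : ∑ i ∈ Finset.univ.filter (fun i => u ≤ x i ∧ x i ≤ v), (Y i - μhat (x i)) ≤ 0)
    (h2 : ∑ i ∈ Finset.univ.filter (fun i => u ≤ x i ∧ x i ≤ v),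
        x i * (Y i - μhat (x i)) ≤ 0)
    (h3 : 0 ≤ ∑ i ∈ Finset.univ.filter (fun i => u < x i ∧ x i < v), (Y i - μhat (x i)))
    (h4 : 0 ≤ ∑ i ∈ Finset.univ.filter (fun i => u < x i ∧ x i < v),
        x i * (Y i - μhat (x i))) :
    |∑ i ∈ Finset.univ.filter (fun i => u ≤ x i ∧ x i ≤ v), (Y i - μhat (x i))| ≤
      |Y k1 - μhat (x k1)| + |Y k2 - μhat (x k2)| ∧
    |∑ i ∈ Finset.univ.filter (fun i => u ≤ x i ∧ x i ≤ v), x i * (Y i - μhat (x i))| ≤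
      |x k1| * |Y k1 - μhat (x k1)| + |x k2| * |Y k2 - μhat (x k2)| := by
  have e1 := sum_split_aux n x hx k1 k2 hk u v hu hv (fun i => Y i - μhat (x i))
  have e2 := sum_split_aux n x hx k1 k2 hk u v hu hv (fun i => x i * (Y i - μhat (x i)))
  constructor
  · rw [abs_of_nonpos h1, e1]
    have := abs_nonneg (Y k1 - μhat (x k1))
    have h1' := neg_abs_le (Y k1 - μhat (x k1))
    have h2' := neg_abs_le (Y k2 - μhat (x k2))
    linarith
  · rw [abs_of_nonpos h2, e2]
    have h1' := neg_abs_le (x k1 * (Y k1 - μhat (x k1)))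
    have h2' := neg_abs_le (x k2 * (Y k2 - μhat (x k2)))
    rw [abs_mul] at h1' h2'
    linarith
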